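/- Let P satisfy P(-σ) = e^{-σ}P(σ) on a finite symmetric set S with ⟨tanh(Σ/2)⟩ > 0. The current j_min(σ) = k·tanh(σ/2) for any real k ≠ 0 achieves scaled variance exactly ⟨j_min²⟩/⟨j_min⟩² − 1 = 1/⟨tanh(Σ/2)⟩ − 1. -/

import Mathlib

lemma tanh_half_id (x : ℝ) :
    Real.tanh (x / 2) * (1 + Real.exp (-x)) = 1 - Real.exp (-x) := by
  have hab : Real.exp (x / 2) * Real.exp (-(x / 2)) = 1 := by
    rw [← Real.exp_add]; ring_nf; exact Real.exp_zero
  have hb2 : Real.exp (-x) = Real.exp (-(x / 2)) * Real.exp (-(x / 2)) := by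
    rw [← Real.exp_add]; ring_nf
  have hpos : 0 < Real.exp (x / 2) + Real.exp (-(x / 2)) := by positivity
  rw [Real.tanh_eq_sinh_div_cosh, Real.sinh_eq, Real.cosh_eq]
  rw [div_mul_eq_mul_div, div_eq_iff (ne_of_gt (by positivity : (0:ℝ) < (Real.exp (x / 2) + Real.exp (-(x / 2))) / 2))]
  linear_combination Real.exp (x / 2) * hb2 + Real.exp (-(x / 2)) * hab

theorem tut_saturation (S : Finset ℝ) (hSym : ∀ σ ∈ S, -σ ∈ S)
    (P : ℝ → ℝ) (hP : ∀ σ ∈ S, 0 ≤ P σ) (hsum : ∑ σ ∈ S, P σ = 1)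
    (hDFT : ∀ σ ∈ S, P (-σ) = Real.exp (-σ) * P σ)
    (htanh : 0 < ∑ σ ∈ S, Real.tanh (σ / 2) * P σ)
    (k : ℝ) (hk : k ≠ 0) :
    (∑ σ ∈ S, (k * Real.tanh (σ / 2)) ^ 2 * P σ) /
        (∑ σ ∈ S, (k * Real.tanh (σ / 2)) * P σ) ^ 2 - 1 =
      1 / (∑ σ ∈ S, Real.tanh (σ / 2) * P σ) - 1 := by
  have hswap : ∀ h : ℝ → ℝ, ∑ σ ∈ S, h σ = ∑ σ ∈ S, h (-σ) := by
    intro h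
    apply Finset.sum_nbij' (fun σ => -σ) (fun σ => -σ)
    · intro a ha; exact hSym a ha
    · intro a ha; exact hSym a ha
    · intro a _; simp
    · intro a _; simp
    · intro a _; simp
  have key : ∑ σ ∈ S, Real.tanh (σ / 2) ^ 2 * P σ
      = ∑ σ ∈ S, Real.tanh (σ / 2) * P σ := by
    have h2 : (2 : ℝ) * ∑ σ ∈ S, Real.tanh (σ / 2) ^ 2 * P σ
        = (2 : ℝ) * ∑ σ ∈ S, Real.tanh (σ / 2) * P σ := by
      have hA := hswap (fun σ => Real.tanh (σ / 2) ^ 2 * P σ)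
      have hB := hswap (fun σ => Real.tanh (σ / 2) * P σ)
      calc (2 : ℝ) * ∑ σ ∈ S, Real.tanh (σ / 2) ^ 2 * P σ
          = ∑ σ ∈ S, (Real.tanh (σ / 2) ^ 2 * P σ
              + Real.tanh (-σ / 2) ^ 2 * P (-σ)) := by
            rw [Finset.sum_add_distrib, ← hA]; ring
        _ = ∑ σ ∈ S, (Real.tanh (σ / 2) * P σ
              + Real.tanh (-σ / 2) * P (-σ)) := by
            apply Finset.sum_congr rfl
            intro σ hσ
            have hd := hDFT σ hσ
            have ht := tanh_half_id σ
            have hneg : Real.tanh (-σ / 2) = -Real.tanh (σ / 2) := by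
              rw [show -σ / 2 = -(σ / 2) by ring, Real.tanh_neg]
            rw [hneg, hd]
            linear_combination Real.tanh (σ / 2) * P σ * ht
        _ = (2 : ℝ) * ∑ σ ∈ S, Real.tanh (σ / 2) * P σ := by
            rw [Finset.sum_add_distrib, ← hB]; ring
    linarith
  set T := ∑ σ ∈ S, Real.tanh (σ / 2) * P σ with hT
  have hTne : T ≠ 0 := ne_of_gt htanh
  have h1 : ∑ σ ∈ S, (k * Real.tanh (σ / 2)) ^ 2 * P σ = k ^ 2 * T := by
    rw [← key, Finset.mul_sum]
    apply Finset.sum_congr rfl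
    intro σ _; ring
  have h2 : ∑ σ ∈ S, (k * Real.tanh (σ / 2)) * P σ = k * T := by
    rw [Finset.mul_sum]
    apply Finset.sum_congr rfl
    intro σ _; ring
  rw [h1, h2]
  field_simp
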